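/- Let X, Y be symmetric real n×n matrices and η > 0. Let u ∈ ℝ be such that u·I_n − η·X is positive definite and tr((u·I_n − η·X)^{-2}) = 1, and set M := (u·I_n − η·X)^{-2}. Define Φ_η(Z) := sup over density matrices M' of [tr(Z·M') + (2/η)·tr(√M')]. If ‖√M · η·Y‖ ≤ 1/2 (spectral norm), then Φ_η(X + Y) − Φ_η(X) ≤ tr(M·Y) + 2η·tr(√M · Y · √M · Y · √M). -/

import Mathlib

open Matrix
open scoped Matrix.Norms.L2Operator

open Classical in
/-- The positive semidefinite square root of a matrix (zero if the matrix is not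
positive semidefinite). -/
noncomputable def psdSqrt {n : ℕ} (M : Matrix (Fin n) (Fin n) ℝ) :
    Matrix (Fin n) (Fin n) ℝ :=
  if h : M.PosSemidef then
    (h.1.eigenvectorUnitary : Matrix (Fin n) (Fin n) ℝ) *
      diagonal (fun i => Real.sqrt (h.1.eigenvalues i)) *
      (star (h.1.eigenvectorUnitary : Matrix (Fin n) (Fin n) ℝ))
  else 0

/-- The `ℓ_{1/2}`-regularized maximum-eigenvalue potential
`Φ_η(X) = sup { tr(X M) + (2/η) tr(√M) : M a density matrix }`. -/
noncomputable def potential {n : ℕ} (η : ℝ) (X : Matrix (Fin n) (Fin n) ℝ) : ℝ :=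
  sSup {r : ℝ | ∃ M : Matrix (Fin n) (Fin n) ℝ, M.PosSemidef ∧ M.trace = 1 ∧
    r = (X * M).trace + (2 / η) * (psdSqrt M).trace}


variable {n : ℕ}

open scoped MatrixOrder in
lemma psdSqrt_eq_cfc {M : Matrix (Fin n) (Fin n) ℝ} (h : M.PosSemidef) :
    psdSqrt M = CFC.sqrt M := by
  rw [psdSqrt, dif_pos h, CFC.sqrt_eq_cfc, cfc_nnreal_eq_real _ M (nonneg_iff_posSemidef.mpr h),
    h.1.cfc_eq]
  simp [IsHermitian.cfc, Function.comp_def, Real.coe_sqrt, Real.coe_toNNReal',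
    max_eq_left (h.eigenvalues_nonneg _)]

lemma psdSqrt_posSemidef {M : Matrix (Fin n) (Fin n) ℝ} (h : M.PosSemidef) :
    (psdSqrt M).PosSemidef := by
  open scoped MatrixOrder in
  rw [psdSqrt_eq_cfc h]; exact nonneg_iff_posSemidef.mp (CFC.sqrt_nonneg M)

lemma psdSqrt_mul_self {M : Matrix (Fin n) (Fin n) ℝ} (h : M.PosSemidef) :
    psdSqrt M * psdSqrt M = M := by
  open scoped MatrixOrder in
  rw [psdSqrt_eq_cfc h]; exact CFC.sqrt_mul_sqrt_self M (nonneg_iff_posSemidef.mpr h)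

lemma psdSqrt_eq {A M : Matrix (Fin n) (Fin n) ℝ} (hA : A.PosSemidef)
    (hM : M.PosSemidef) (h : A ^ 2 = M) : psdSqrt M = A := by
  open scoped MatrixOrder in
  rw [psdSqrt_eq_cfc hM]; exact CFC.sqrt_unique (by rw [← sq]; exact h) (nonneg_iff_posSemidef.mpr hA)

lemma trace_nonneg_of_posSemidef {M : Matrix (Fin n) (Fin n) ℝ} (h : M.PosSemidef) :
    0 ≤ M.trace := by
  rw [Matrix.trace]
  refine Finset.sum_nonneg fun i _ => ?_
  have := h.dotProduct_mulVec_nonneg (Pi.single i 1)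
  simpa using this

lemma posDef_of_psd_isUnit {M : Matrix (Fin n) (Fin n) ℝ} (h : M.PosSemidef)
    (hu : IsUnit M) : M.PosDef := by
  refine posDef_iff_dotProduct_mulVec.mpr ⟨h.1, fun x hx => ?_⟩
  rcases lt_or_eq_of_le (h.dotProduct_mulVec_nonneg x) with hlt | heq
  · exact hlt
  · exfalso
    have h0 : M *ᵥ x = 0 := (h.dotProduct_mulVec_zero_iff x).mp heq.symm
    have hinj := (Matrix.mulVec_injective_iff_isUnit).mpr hu
    exact hx (hinj (by simpa using h0))

lemma psdSqrt_posDef {M : Matrix (Fin n) (Fin n) ℝ} (h : M.PosDef) :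
    (psdSqrt M).PosDef := by
  have hps := psdSqrt_posSemidef h.posSemidef
  refine posDef_of_psd_isUnit hps ?_
  have hdet : (psdSqrt M).det * (psdSqrt M).det = M.det := by
    rw [← Matrix.det_mul, psdSqrt_mul_self h.posSemidef]
  have : IsUnit ((psdSqrt M).det) := by
    have := h.det_pos
    refine isUnit_iff_ne_zero.mpr fun hc => ?_
    rw [hc, mul_zero] at hdet; linarith [hdet ▸ this]
  exact (Matrix.isUnit_iff_isUnit_det _).mpr this

lemma posDef_conj {A B : Matrix (Fin n) (Fin n) ℝ} (hA : A.PosDef) (hB : IsUnit B) :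
    (Bᴴ * A * B).PosDef := by
  refine posDef_iff_dotProduct_mulVec.mpr ⟨?_, fun x hx => ?_⟩
  · have := hA.1
    unfold Matrix.IsHermitian at *
    rw [conjTranspose_mul, conjTranspose_mul, conjTranspose_conjTranspose, this, mul_assoc]
  · have hBx : B *ᵥ x ≠ 0 := by
      intro hc
      have hinj := (Matrix.mulVec_injective_iff_isUnit).mpr hB
      exact hx (hinj (by simpa using hc))
    have h2 := hA.dotProduct_mulVec_pos hBx
    have : star x ⬝ᵥ (Bᴴ * A * B) *ᵥ x = star (B *ᵥ x) ⬝ᵥ A *ᵥ (B *ᵥ x) := by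
      rw [← mulVec_mulVec, ← mulVec_mulVec, Matrix.dotProduct_mulVec, star_mulVec]
    rw [this]; exact h2

lemma eigenvalue_abs_le {S K C : Matrix (Fin n) (Fin n) ℝ} (hS : S.IsHermitian)
    (hC : IsUnit C) (hKC : K * C = C * S) (i : Fin n) :
    |hS.eigenvalues i| ≤ ‖K‖ := by
  have hw0 : hS.eigenvectorBasis i ≠ 0 := hS.eigenvectorBasis.orthonormal.ne_zero i
  set v : EuclideanSpace ℝ (Fin n) :=
    (EuclideanSpace.equiv (Fin n) ℝ).symm (C *ᵥ ⇑(hS.eigenvectorBasis i)) with hv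
  have hinj := (Matrix.mulVec_injective_iff_isUnit).mpr hC
  have hv0 : v ≠ 0 := by
    intro hc
    apply hw0
    have hCw : C *ᵥ ⇑(hS.eigenvectorBasis i) = 0 := by
      simpa [hv] using hc
    have h0 : (⇑(hS.eigenvectorBasis i) : Fin n → ℝ) = 0 := hinj (by simpa using hCw)
    ext j
    exact congrFun h0 j
  have hKv : K *ᵥ v = hS.eigenvalues i • (v : Fin n → ℝ) := by
    show K *ᵥ (C *ᵥ ⇑(hS.eigenvectorBasis i)) = _
    rw [mulVec_mulVec, hKC, ← mulVec_mulVec, hS.mulVec_eigenvectorBasis, Matrix.mulVec_smul]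
    rfl
  have hle := Matrix.l2_opNorm_mulVec K v
  have hnorm : ‖(EuclideanSpace.equiv (Fin n) ℝ).symm (K *ᵥ v)‖ = |hS.eigenvalues i| * ‖v‖ := by
    have : (EuclideanSpace.equiv (Fin n) ℝ).symm (K *ᵥ v) = hS.eigenvalues i • v := by
      rw [hKv]; rfl
    rw [this, norm_smul, Real.norm_eq_abs]
  rw [hnorm] at hle
  have hvpos : 0 < ‖v‖ := norm_pos_iff.mpr hv0
  exact le_of_mul_le_mul_right (by linarith [hle]) hvpos

lemma spectral_bounds {S : Matrix (Fin n) (Fin n) ℝ} (hS : S.IsHermitian)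
    (hev : ∀ i, |hS.eigenvalues i| ≤ 1 / 2) :
    (1 - S).PosDef ∧ ((2 : ℝ) • (1 : Matrix (Fin n) (Fin n) ℝ) - (1 - S)⁻¹).PosSemidef := by
  set U : Matrix (Fin n) (Fin n) ℝ := (hS.eigenvectorUnitary : Matrix (Fin n) (Fin n) ℝ) with hUdef
  have hU1 : U * Uᴴ = 1 := by
    rw [← Matrix.star_eq_conjTranspose]
    exact (Matrix.mem_unitaryGroup_iff).mp hS.eigenvectorUnitary.2
  have hU2 : Uᴴ * U = 1 := by
    rw [← Matrix.star_eq_conjTranspose]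
    exact (Matrix.mem_unitaryGroup_iff').mp hS.eigenvectorUnitary.2
  have hUu : IsUnit Uᴴ := by
    have hdet := congrArg Matrix.det hU2
    rw [Matrix.det_mul, Matrix.det_one] at hdet
    exact (Matrix.isUnit_iff_isUnit_det _).mpr (IsUnit.of_mul_eq_one _ hdet)
  have hdec : S = U * diagonal hS.eigenvalues * Uᴴ := by
    have := hS.spectral_theorem
    simpa [Matrix.star_eq_conjTranspose] using this
  have hposl : ∀ i, (1:ℝ)/2 ≤ 1 - hS.eigenvalues i := by
    intro i; have := abs_le.mp (hev i); linarith [this.2]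
  have hone : (1 : Matrix (Fin n) (Fin n) ℝ) = U * 1 * Uᴴ := by rw [mul_one, hU1]
  have hsub : 1 - S = U * diagonal (fun i => 1 - hS.eigenvalues i) * Uᴴ := by
    have : diagonal (fun i => 1 - hS.eigenvalues i) =
        1 - diagonal hS.eigenvalues := by
      rw [← Matrix.diagonal_one, Matrix.diagonal_sub]
    rw [this, Matrix.mul_sub, Matrix.sub_mul, mul_one, hU1, ← hdec]
  have hPD : (1 - S).PosDef := by
    rw [hsub]
    have : (U * diagonal (fun i => 1 - hS.eigenvalues i) * Uᴴ) =
        (Uᴴ)ᴴ * diagonal (fun i => 1 - hS.eigenvalues i) * Uᴴ := by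
      rw [conjTranspose_conjTranspose]
    rw [this]
    exact posDef_conj (Matrix.PosDef.diagonal fun i => by linarith [hposl i]) hUu
  refine ⟨hPD, ?_⟩
  have hinv : (1 - S)⁻¹ = U * diagonal (fun i => (1 - hS.eigenvalues i)⁻¹) * Uᴴ := by
    refine (Matrix.inv_eq_left_inv ?_)
    rw [hsub]
    calc U * diagonal (fun i => (1 - hS.eigenvalues i)⁻¹) * Uᴴ *
          (U * diagonal (fun i => 1 - hS.eigenvalues i) * Uᴴ)
        = U * (diagonal (fun i => (1 - hS.eigenvalues i)⁻¹) * (Uᴴ * U) *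
            diagonal (fun i => 1 - hS.eigenvalues i)) * Uᴴ := by
              simp only [Matrix.mul_assoc]
      _ = U * (diagonal (fun i => (1 - hS.eigenvalues i)⁻¹) *
            diagonal (fun i => 1 - hS.eigenvalues i)) * Uᴴ := by rw [hU2, mul_one]
      _ = U * 1 * Uᴴ := by
            rw [Matrix.diagonal_mul_diagonal]
            congr 1
            have hfun : (fun i => (1 - hS.eigenvalues i)⁻¹ * (1 - hS.eigenvalues i)) =
                fun _ : Fin n => (1:ℝ) := by
              funext i
              refine inv_mul_cancel₀ ?_
              have := hposl i
              intro h0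
              rw [h0] at this
              norm_num at this
            rw [hfun, Matrix.diagonal_one]
      _ = 1 := by rw [mul_one, hU1]
  have hdiff : (2 : ℝ) • (1 : Matrix (Fin n) (Fin n) ℝ) - (1 - S)⁻¹ =
      (Uᴴ)ᴴ * diagonal (fun i => 2 - (1 - hS.eigenvalues i)⁻¹) * Uᴴ := by
    rw [conjTranspose_conjTranspose, hinv]
    have h2I : (2:ℝ) • (1 : Matrix (Fin n) (Fin n) ℝ) = diagonal (fun _ : Fin n => (2:ℝ)) := by
      ext i j
      by_cases h : i = j
      · subst h; simp [Matrix.diagonal_apply, Matrix.one_apply]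
      · simp [Matrix.diagonal_apply, Matrix.one_apply, h]
    have : diagonal (fun i => 2 - (1 - hS.eigenvalues i)⁻¹) =
        (2:ℝ) • (1 : Matrix (Fin n) (Fin n) ℝ) - diagonal (fun i => (1 - hS.eigenvalues i)⁻¹) := by
      rw [h2I, Matrix.diagonal_sub]
    rw [this, Matrix.mul_sub, Matrix.sub_mul, Matrix.mul_smul, mul_one, Matrix.smul_mul, hU1]
  rw [hdiff]
  refine Matrix.PosSemidef.conjTranspose_mul_mul_same ?_ (Uᴴ)
  refine Matrix.posSemidef_diagonal_iff.mpr fun i => ?_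
  have h1 : (1:ℝ)/2 ≤ 1 - hS.eigenvalues i := hposl i
  have h2 : (1 - hS.eigenvalues i)⁻¹ ≤ 2 := by
    rw [inv_le_comm₀ (by linarith) (by norm_num)]
    linarith
  linarith

lemma core_bound {B D : Matrix (Fin n) (Fin n) ℝ} (hB : B.PosDef) (hD : D.IsHermitian)
    (hK : ‖B⁻¹ * D‖ ≤ 1 / 2) :
    (B - D).PosDef ∧
      ((B - D)⁻¹).trace ≤ (B⁻¹).trace + (B⁻¹ * D * B⁻¹).trace +
        2 * (B⁻¹ * D * B⁻¹ * D * B⁻¹).trace := by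
  classical
  set C := psdSqrt B with hCdef
  have hC : C.PosDef := psdSqrt_posDef hB
  have hCC : C * C = B := psdSqrt_mul_self hB.posSemidef
  have hBdet : IsUnit B.det := hB.det_pos.ne'.isUnit
  have hCdet : IsUnit C.det := hC.det_pos.ne'.isUnit
  have hBB : B * B⁻¹ = 1 := Matrix.mul_nonsing_inv _ hBdet
  have hB'B : B⁻¹ * B = 1 := Matrix.nonsing_inv_mul _ hBdet
  have hCC1 : C * C⁻¹ = 1 := Matrix.mul_nonsing_inv _ hCdet
  have hC1C : C⁻¹ * C = 1 := Matrix.nonsing_inv_mul _ hCdet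
  have hBinv : B⁻¹ = C⁻¹ * C⁻¹ := by rw [← Matrix.mul_inv_rev, hCC]
  have hCH : Cᴴ = C := hC.isHermitian
  have hCiH : (C⁻¹)ᴴ = C⁻¹ := hC.posSemidef.inv.isHermitian
  have hBiH : (B⁻¹)ᴴ = B⁻¹ := hB.posSemidef.inv.isHermitian
  set S := C⁻¹ * D * C⁻¹ with hSdef
  have hS : S.IsHermitian := by
    show Sᴴ = S
    rw [hSdef, conjTranspose_mul, conjTranspose_mul, hCiH, hD.eq, Matrix.mul_assoc]
  have hCiu : IsUnit (C⁻¹) := by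
    have hdet := congrArg Matrix.det hC1C
    rw [Matrix.det_mul, Matrix.det_one] at hdet
    exact (Matrix.isUnit_iff_isUnit_det _).mpr (IsUnit.of_mul_eq_one _ hdet)
  -- eigenvalue bound for S
  have hev : ∀ i, |hS.eigenvalues i| ≤ 1 / 2 := by
    intro i
    refine le_trans (eigenvalue_abs_le hS hCiu ?_ i) hK
    -- (B⁻¹ * D) * C⁻¹ = C⁻¹ * S
    rw [hSdef, hBinv]
    simp only [Matrix.mul_assoc]
  obtain ⟨h1S, hQ⟩ := spectral_bounds hS hev
  -- B - D = C * (1 - S) * C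
  have hCSC : C * S * C = D := by
    rw [hSdef]
    calc C * (C⁻¹ * D * C⁻¹) * C = (C * C⁻¹) * D * (C⁻¹ * C) := by
          simp only [Matrix.mul_assoc]
      _ = D := by rw [hCC1, hC1C, one_mul, mul_one]
  have hBD : B - D = C * (1 - S) * C := by
    rw [Matrix.mul_sub, Matrix.sub_mul, mul_one, hCC, hCSC]
  have hPD : (B - D).PosDef := by
    have := posDef_conj h1S ((Matrix.isUnit_iff_isUnit_det _).mpr hCdet)
    rw [hCH] at this
    rwa [hBD]
  refine ⟨hPD, ?_⟩
  have hBDdet : IsUnit (B - D).det := hPD.det_pos.ne'.isUnit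
  set R := (B - D)⁻¹ with hRdef
  have hR1 : (B - D) * R = 1 := Matrix.mul_nonsing_inv _ hBDdet
  have hR2 : R * (B - D) = 1 := Matrix.nonsing_inv_mul _ hBDdet
  -- R = C⁻¹ (1-S)⁻¹ C⁻¹
  have hRform : R = C⁻¹ * (1 - S)⁻¹ * C⁻¹ := by
    rw [hRdef, hBD, Matrix.mul_inv_rev, Matrix.mul_inv_rev, Matrix.mul_assoc]
  -- 2 B⁻¹ - R is PSD
  have hPSD2 : ((2 : ℝ) • B⁻¹ - R).PosSemidef := by
    have hconj := Matrix.PosSemidef.conjTranspose_mul_mul_same hQ (C⁻¹)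
    rw [hCiH] at hconj
    have hrw : C⁻¹ * ((2 : ℝ) • (1 : Matrix (Fin n) (Fin n) ℝ) - (1 - S)⁻¹) * C⁻¹ =
        (2 : ℝ) • B⁻¹ - R := by
      rw [Matrix.mul_sub, Matrix.sub_mul, hRform, Matrix.mul_smul, mul_one, Matrix.smul_mul,
        hBinv]
    rwa [hrw] at hconj
  -- resolvent expansion
  have h1 : B⁻¹ * (D * R) = R - B⁻¹ := by
    have e : B * R - (B - D) * R = D * R := by rw [← Matrix.sub_mul, sub_sub_cancel]
    calc B⁻¹ * (D * R) = B⁻¹ * (B * R - (B - D) * R) := by rw [e]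
      _ = B⁻¹ * (B * R) - B⁻¹ * ((B - D) * R) := by rw [Matrix.mul_sub]
      _ = R - B⁻¹ := by rw [hR1, mul_one, ← Matrix.mul_assoc, hB'B, one_mul]
  have h2 : R * D * B⁻¹ = R - B⁻¹ := by
    have e : R * B - R * (B - D) = R * D := by rw [← Matrix.mul_sub, sub_sub_cancel]
    calc R * D * B⁻¹ = (R * B - R * (B - D)) * B⁻¹ := by rw [e]
      _ = R * B * B⁻¹ - R * (B - D) * B⁻¹ := by rw [Matrix.sub_mul]
      _ = R - B⁻¹ := by rw [hR2, one_mul, Matrix.mul_assoc, hBB, mul_one]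
  have hres : R = B⁻¹ + B⁻¹ * D * B⁻¹ + B⁻¹ * D * R * D * B⁻¹ := by
    have h2' : R = B⁻¹ + R * D * B⁻¹ := by rw [h2]; abel
    have h1' : R = B⁻¹ + B⁻¹ * D * R := by rw [Matrix.mul_assoc, h1]; abel
    calc R = B⁻¹ + R * D * B⁻¹ := h2'
      _ = B⁻¹ + (B⁻¹ + B⁻¹ * D * R) * D * B⁻¹ := by rw [← h1']
      _ = B⁻¹ + B⁻¹ * D * B⁻¹ + B⁻¹ * D * R * D * B⁻¹ := by noncomm_ring
  -- trace bound on the second order term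
  have hG : (D * B⁻¹)ᴴ = B⁻¹ * D := by
    rw [conjTranspose_mul, hBiH, hD.eq]
  have hsandwich : 0 ≤ ((D * B⁻¹)ᴴ * ((2 : ℝ) • B⁻¹ - R) * (D * B⁻¹)).trace :=
    trace_nonneg_of_posSemidef (Matrix.PosSemidef.conjTranspose_mul_mul_same hPSD2 (D * B⁻¹))
  have hexpand : (D * B⁻¹)ᴴ * ((2 : ℝ) • B⁻¹ - R) * (D * B⁻¹) =
      (2 : ℝ) • (B⁻¹ * D * B⁻¹ * D * B⁻¹) - B⁻¹ * D * R * D * B⁻¹ := by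
    rw [hG]
    rw [Matrix.mul_sub, Matrix.sub_mul, Matrix.mul_smul, Matrix.smul_mul]
    congr 1 <;> simp only [Matrix.mul_assoc]
  rw [hexpand] at hsandwich
  rw [Matrix.trace_sub, Matrix.trace_smul, smul_eq_mul] at hsandwich
  have htrace3 : (B⁻¹ * D * R * D * B⁻¹).trace ≤ 2 * (B⁻¹ * D * B⁻¹ * D * B⁻¹).trace := by
    linarith
  have := congrArg Matrix.trace hres
  rw [Matrix.trace_add, Matrix.trace_add] at this
  rw [this]
  linarith

lemma amgm_trace {B' M' : Matrix (Fin n) (Fin n) ℝ} (hB' : B'.PosDef) (hM' : M'.PosSemidef) :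
    2 * (psdSqrt M').trace ≤ (B' * M').trace + (B'⁻¹).trace := by
  classical
  set C := psdSqrt B' with hCdef
  set Rt := psdSqrt M' with hRtdef
  have hC : C.PosDef := psdSqrt_posDef hB'
  have hCC : C * C = B' := psdSqrt_mul_self hB'.posSemidef
  have hRR : Rt * Rt = M' := psdSqrt_mul_self hM'
  have hCdet : IsUnit C.det := hC.det_pos.ne'.isUnit
  have hCC1 : C * C⁻¹ = 1 := Matrix.mul_nonsing_inv _ hCdet
  have hC1C : C⁻¹ * C = 1 := Matrix.nonsing_inv_mul _ hCdet
  have hBinv : B'⁻¹ = C⁻¹ * C⁻¹ := by rw [← Matrix.mul_inv_rev, hCC]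
  have hCH : Cᴴ = C := hC.isHermitian
  have hCiH : (C⁻¹)ᴴ = C⁻¹ := hC.posSemidef.inv.isHermitian
  have hRtH : Rtᴴ = Rt := (psdSqrt_posSemidef hM').isHermitian
  set E := C * Rt - C⁻¹ with hEdef
  have hpos : 0 ≤ (Eᴴ * E).trace :=
    trace_nonneg_of_posSemidef (Matrix.posSemidef_conjTranspose_mul_self E)
  have hEH : Eᴴ = Rt * C - C⁻¹ := by
    rw [hEdef, conjTranspose_sub, conjTranspose_mul, hCH, hRtH, hCiH]
  have hexp : Eᴴ * E = Rt * C * (C * Rt) - Rt * C * C⁻¹ - C⁻¹ * (C * Rt) + C⁻¹ * C⁻¹ := by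
    rw [hEH, hEdef, Matrix.sub_mul, Matrix.mul_sub, Matrix.mul_sub]
    abel
  have htr : (Eᴴ * E).trace = (B' * M').trace - 2 * Rt.trace + (B'⁻¹).trace := by
    rw [hexp]
    have t1 : (Rt * C * (C * Rt)).trace = (B' * M').trace := by
      rw [show Rt * C * (C * Rt) = Rt * (C * C) * Rt by simp only [Matrix.mul_assoc],
        hCC, Matrix.trace_mul_cycle, hRR, Matrix.trace_mul_comm]
    have t2 : (Rt * C * C⁻¹).trace = Rt.trace := by
      rw [Matrix.mul_assoc, hCC1, mul_one]
    have t3 : (C⁻¹ * (C * Rt)).trace = Rt.trace := by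
      rw [← Matrix.mul_assoc, hC1C, one_mul]
    rw [Matrix.trace_add, Matrix.trace_sub, Matrix.trace_sub, t1, t2, t3, ← hBinv]
    ring
  rw [htr] at hpos
  linarith

lemma potential_le {η : ℝ} (hη : 0 < η) {Z : Matrix (Fin n) (Fin n) ℝ} {v : ℝ}
    (hB' : (v • (1 : Matrix (Fin n) (Fin n) ℝ) - η • Z).PosDef)
    {r : ℝ}
    (hr : r ∈ {r : ℝ | ∃ M : Matrix (Fin n) (Fin n) ℝ, M.PosSemidef ∧ M.trace = 1 ∧
      r = (Z * M).trace + (2 / η) * (psdSqrt M).trace}) :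
    r ≤ (v + ((v • (1 : Matrix (Fin n) (Fin n) ℝ) - η • Z)⁻¹).trace) / η := by
  obtain ⟨M', hM', htrM', rfl⟩ := hr
  set B' := v • (1 : Matrix (Fin n) (Fin n) ℝ) - η • Z with hB'def
  have hAm := amgm_trace hB' hM'
  have htrB'M : (B' * M').trace = v - η * (Z * M').trace := by
    rw [hB'def, Matrix.sub_mul, Matrix.smul_mul, Matrix.smul_mul, one_mul, Matrix.trace_sub,
      Matrix.trace_smul, Matrix.trace_smul, htrM', smul_eq_mul, smul_eq_mul, mul_one]
  rw [htrB'M] at hAm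
  rw [le_div_iff₀ hη]
  have hexp : ((Z * M').trace + 2 / η * (psdSqrt M').trace) * η =
      η * (Z * M').trace + 2 * (psdSqrt M').trace := by
    field_simp
  rw [hexp]
  linarith

/-- Lemma 3.1 (potential increase bound, `c = 2` form). -/
theorem potential_increase (n : ℕ) (X Y : Matrix (Fin n) (Fin n) ℝ)
    (hX : X.IsSymm) (hY : Y.IsSymm) (η : ℝ) (hη : 0 < η) (u : ℝ)
    (hu : (u • (1 : Matrix (Fin n) (Fin n) ℝ) - η • X).PosDef)
    (htr : ((u • (1 : Matrix (Fin n) (Fin n) ℝ) - η • X)⁻¹ ^ 2).trace = 1)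
    (hnorm : ‖psdSqrt ((u • (1 : Matrix (Fin n) (Fin n) ℝ) - η • X)⁻¹ ^ 2) * (η • Y)‖ ≤ 1 / 2) :
    potential η (X + Y) - potential η X ≤
      (((u • (1 : Matrix (Fin n) (Fin n) ℝ) - η • X)⁻¹ ^ 2) * Y).trace +
        2 * η *
          (psdSqrt ((u • (1 : Matrix (Fin n) (Fin n) ℝ) - η • X)⁻¹ ^ 2) * Y *
            psdSqrt ((u • (1 : Matrix (Fin n) (Fin n) ℝ) - η • X)⁻¹ ^ 2) * Y *
            psdSqrt ((u • (1 : Matrix (Fin n) (Fin n) ℝ) - η • X)⁻¹ ^ 2)).trace := by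
  classical
  set B : Matrix (Fin n) (Fin n) ℝ := u • (1 : Matrix (Fin n) (Fin n) ℝ) - η • X with hBdef
  have hBiPD : (B⁻¹).PosDef := hu.inv
  have hBiH : (B⁻¹)ᴴ = B⁻¹ := hBiPD.isHermitian
  have hMps : ((B⁻¹) ^ 2).PosSemidef := hBiPD.posSemidef.pow 2
  have hsqrtM : psdSqrt ((B⁻¹) ^ 2) = B⁻¹ := psdSqrt_eq hBiPD.posSemidef hMps rfl
  rw [hsqrtM] at hnorm ⊢
  have hBdet : IsUnit B.det := hu.det_pos.ne'.isUnit
  have hBB1 : B * B⁻¹ = 1 := Matrix.mul_nonsing_inv _ hBdet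
  have hYH : Yᴴ = Y := by
    rw [Matrix.conjTranspose_eq_transpose_of_trivial]
    exact hY
  have hDH : ((η • Y) : Matrix (Fin n) (Fin n) ℝ).IsHermitian := by
    show (η • Y)ᴴ = η • Y
    rw [Matrix.conjTranspose_smul, hYH]
    norm_num
  obtain ⟨hPD, htrineq⟩ := core_bound hu hDH hnorm
  have hBD : u • (1 : Matrix (Fin n) (Fin n) ℝ) - η • (X + Y) = B - η • Y := by
    rw [hBdef, smul_add]
    abel
  -- upper bound on potential η (X + Y)
  have hup : potential η (X + Y) ≤ (u + ((B - η • Y)⁻¹).trace) / η := by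
    rw [potential]
    refine csSup_le ⟨((X + Y) * (B⁻¹ ^ 2)).trace + (2 / η) * (psdSqrt (B⁻¹ ^ 2)).trace,
      ⟨B⁻¹ ^ 2, hMps, htr, rfl⟩⟩ fun r hr => ?_
    have := potential_le hη (Z := X + Y) (v := u) (by rwa [hBD]) hr
    rwa [hBD] at this
  -- the value attained at B⁻¹ ^ 2 for X
  have hXM : ((X * (B⁻¹ ^ 2)).trace + (2 / η) * (psdSqrt (B⁻¹ ^ 2)).trace)
      = (u + (B⁻¹).trace) / η := by
    have hBM : B * B⁻¹ ^ 2 = B⁻¹ := by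
      rw [pow_two, ← Matrix.mul_assoc, hBB1, one_mul]
    have hXMtr : η * (X * (B⁻¹ ^ 2)).trace = u - (B⁻¹).trace := by
      have : (η • X) * (B⁻¹ ^ 2) = u • (B⁻¹ ^ 2) - B⁻¹ := by
        rw [show (η • X : Matrix (Fin n) (Fin n) ℝ) = u • 1 - B by rw [hBdef]; abel,
          Matrix.sub_mul, Matrix.smul_mul, one_mul, hBM]
      have htr2 := congrArg Matrix.trace this
      rw [Matrix.smul_mul, Matrix.trace_smul, Matrix.trace_sub, Matrix.trace_smul, htr,
        smul_eq_mul, smul_eq_mul, mul_one] at htr2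
      exact htr2
    rw [hsqrtM, eq_div_iff hη.ne', add_mul]
    have h2 : 2 / η * (B⁻¹).trace * η = 2 * (B⁻¹).trace := by
      field_simp
    rw [h2]
    linarith [hXMtr, mul_comm η ((X * (B⁻¹ ^ 2)).trace)]
  have hbdd : BddAbove {r : ℝ | ∃ M : Matrix (Fin n) (Fin n) ℝ, M.PosSemidef ∧ M.trace = 1 ∧
      r = (X * M).trace + (2 / η) * (psdSqrt M).trace} := by
    refine ⟨(u + (B⁻¹).trace) / η, fun r hr => ?_⟩
    exact potential_le hη (Z := X) (v := u) hu hr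
  have hlow : (u + (B⁻¹).trace) / η ≤ potential η X := by
    rw [potential, ← hXM]
    exact le_csSup hbdd ⟨B⁻¹ ^ 2, hMps, htr, rfl⟩
  -- scalar extraction in the trace inequality
  have hs1 : (B⁻¹ * (η • Y) * B⁻¹).trace = η * ((B⁻¹ ^ 2 * Y)).trace := by
    rw [Matrix.mul_smul, Matrix.smul_mul, Matrix.trace_smul, smul_eq_mul]
    congr 1
    rw [Matrix.trace_mul_cycle, pow_two]
  have hs2 : (B⁻¹ * (η • Y) * B⁻¹ * (η • Y) * B⁻¹).trace
      = η ^ 2 * (B⁻¹ * Y * B⁻¹ * Y * B⁻¹).trace := by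
    have : B⁻¹ * (η • Y) * B⁻¹ * (η • Y) * B⁻¹
        = (η ^ 2) • (B⁻¹ * Y * B⁻¹ * Y * B⁻¹) := by
      simp only [Matrix.mul_smul, Matrix.smul_mul, smul_smul]
      rw [pow_two]
    rw [this, Matrix.trace_smul, smul_eq_mul]
  rw [hs1, hs2] at htrineq
  have hfinal : potential η (X + Y) - potential η X ≤
      (((B - η • Y)⁻¹).trace - (B⁻¹).trace) / η := by
    have := sub_le_sub hup hlow
    calc potential η (X + Y) - potential η X
        ≤ (u + ((B - η • Y)⁻¹).trace) / η - (u + (B⁻¹).trace) / η := this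
      _ = (((B - η • Y)⁻¹).trace - (B⁻¹).trace) / η := by ring
  refine le_trans hfinal ?_
  rw [div_le_iff₀ hη] at *
  · nlinarith [htrineq, sq_nonneg η]
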